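/- Let N ≥ 2 and fix a bipartition of {1,…,N} into nonempty sets α and its complement ᾱ. Suppose a product distribution P(x|X) = Q(x_α | X_α) · R(x_ᾱ | X_ᾱ) satisfies the N-partite higher-dimensional Hardy conditions: (i) P(1…1|u…u) = q > 0; (ii) for each r, P(1…1, x_r, 1…1 | u…u, v_r, u…u) = 0 whenever x_r ≠ d_r; (iii) for fixed j and all i ≠ j, P with outcomes d_i at position i and d_j at position j (settings v_i, v_j, others u) = 0. Then we obtain a contradiction; hence no product (bilocal) distribution satisfies all conditions. -/

import Mathlib

/-- Settings of party `i` are `Bool` (`false = u_i`, `true = v_i`); outcomes of party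
`i` lie in `Fin (d i + 2)` (so party `i` has at least two outcomes), where `0` encodes
the outcome "1" and `Fin.last (d i + 1)` encodes the last outcome "d_i". -/
def IsBox {ι : Type} [Fintype ι] [DecidableEq ι] (o : ι → ℕ)
    (B : (∀ i, Fin (o i)) → (ι → Bool) → ℝ) : Prop :=
  (∀ x X, 0 ≤ B x X) ∧ ∀ X, ∑ x, B x X = 1

/-- No-signaling: the marginal on any subset `S` of parties is independent of the
settings of the remaining parties. -/
def NoSignaling {ι : Type} [Fintype ι] [DecidableEq ι] (o : ι → ℕ)
    (B : (∀ i, Fin (o i)) → (ι → Bool) → ℝ) : Prop :=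
  ∀ (S : Finset ι) (x : ∀ i, Fin (o i)) (X X' : ι → Bool),
    (∀ i ∈ S, X i = X' i) →
    (∑ y : ∀ i, Fin (o i), if ∀ i ∈ S, y i = x i then B y X else 0) =
    (∑ y : ∀ i, Fin (o i), if ∀ i ∈ S, y i = x i then B y X' else 0)

lemma key_lemma {ι : Type} [Fintype ι] [DecidableEq ι] (o : ι → ℕ)
    (B : (∀ i, Fin (o i)) → (ι → Bool) → ℝ) (hB : IsBox o B)
    (hns : NoSignaling o B) (r : ι) (z : ∀ i, Fin (o i))
    (X' : ι → Bool) (hX' : ∀ i, i ≠ r → X' i = false) (ℓ : Fin (o r))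
    (h0 : ∀ y : Fin (o r), y ≠ ℓ → B (Function.update z r y) X' = 0) :
    B z (fun _ => false) ≤ B (Function.update z r ℓ) X' := by
  have hsum := hns ({r}ᶜ) z (fun _ => false) X'
    (fun i hi => (hX' i (by simpa using hi)).symm)
  have hL : B z (fun _ => false) ≤
      ∑ y : ∀ i, Fin (o i), if ∀ i ∈ ({r}ᶜ : Finset ι), y i = z i
        then B y (fun _ => false) else 0 := by
    have h := Finset.single_le_sum
      (f := fun y : ∀ i, Fin (o i) => if ∀ i ∈ ({r}ᶜ : Finset ι), y i = z i
        then B y (fun _ => false) else 0)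
      (fun y _ => by split
                     · exact hB.1 _ _
                     · exact le_rfl)
      (Finset.mem_univ z)
    simpa using h
  have hRs : (∑ y : ∀ i, Fin (o i), if ∀ i ∈ ({r}ᶜ : Finset ι), y i = z i
      then B y X' else 0) = B (Function.update z r ℓ) X' := by
    rw [Finset.sum_eq_single (Function.update z r ℓ)]
    · rw [if_pos]
      intro i hi
      exact Function.update_of_ne (by simpa using hi) _ _
    · intro b _ hb
      split
      · rename_i hcond
        have hbr : b = Function.update z r (b r) := by
          funext i
          by_cases hi : i = r
          · subst hi; rw [Function.update_self]
          · rw [Function.update_of_ne hi]; exact hcond i (by simpa using hi)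
        have hbrl : b r ≠ ℓ := by
          intro h; apply hb; rw [hbr, h]
        rw [hbr]; exact h0 _ hbrl
      · rfl
    · intro h; exact absurd (Finset.mem_univ _) h
  calc B z (fun _ => false) ≤ _ := hL
    _ = _ := hsum
    _ = _ := hRs

/-- No product of no-signaling boxes across a nontrivial bipartition `(α, αᶜ)`
satisfies the `N`-partite higher-dimensional Hardy conditions. -/
theorem stmt_6 {N : ℕ} (hN : 2 ≤ N) (d : Fin N → ℕ)
    (α : Finset (Fin N)) (hα : α.Nonempty) (hαc : (αᶜ : Finset (Fin N)).Nonempty)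
    (Q : (∀ i : α, Fin (d i + 2)) → (α → Bool) → ℝ)
    (R : (∀ i : (αᶜ : Finset (Fin N)), Fin (d i + 2)) →
      ((αᶜ : Finset (Fin N)) → Bool) → ℝ)
    (hQ : IsBox (fun i : α => d i + 2) Q)
    (hQns : NoSignaling (fun i : α => d i + 2) Q)
    (hR : IsBox (fun i : (αᶜ : Finset (Fin N)) => d i + 2) R)
    (hRns : NoSignaling (fun i : (αᶜ : Finset (Fin N)) => d i + 2) R)
    (P : (∀ i, Fin (d i + 2)) → (Fin N → Bool) → ℝ)
    (hP : ∀ x X, P x X =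
      Q (fun i => x i) (fun i => X i) * R (fun i => x i) (fun i => X i))
    (q : ℝ) (hq : 0 < q)
    (h1 : P (fun _ => 0) (fun _ => false) = q)
    (h2 : ∀ (r : Fin N) (x : ∀ i, Fin (d i + 2)),
      x r ≠ Fin.last (d r + 1) → (∀ i, i ≠ r → x i = 0) →
      P x (fun i => decide (i = r)) = 0)
    (j : Fin N)
    (h3 : ∀ i : Fin N, i ≠ j →
      P (fun k => if k = i ∨ k = j then Fin.last (d k + 1) else 0)
        (fun k => decide (k = i ∨ k = j)) = 0) :
    False := by
  -- positivity of the two local weights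
  have hq' : Q (fun _ => 0) (fun _ => false) * R (fun _ => 0) (fun _ => false) = q := by
    rw [← h1, hP]
  have hqQ : 0 < Q (fun _ => 0) (fun _ => false) := by
    rcases (hQ.1 (fun _ => 0) (fun _ => false)).lt_or_eq with h | h
    · exact h
    · rw [← h, zero_mul] at hq'; exact absurd hq'.symm hq.ne'
  have hqR : 0 < R (fun _ => 0) (fun _ => false) := by
    rcases (hR.1 (fun _ => 0) (fun _ => false)).lt_or_eq with h | h
    · exact h
    · rw [← h, mul_zero] at hq'; exact absurd hq'.symm hq.ne'
  -- Q-side positivity at v_r for r ∈ α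
  have hQside : ∀ (r : Fin N) (hr : r ∈ α),
      0 < Q (Function.update (fun _ => 0) (⟨r, hr⟩ : α) (Fin.last (d r + 1)))
        (fun k : α => decide ((k : Fin N) = r)) := by
    intro r hr
    refine lt_of_lt_of_le hqQ (key_lemma (fun i : α => d i + 2) Q hQ hQns
      (⟨r, hr⟩ : α) (fun _ => 0) (fun k : α => decide ((k : Fin N) = r))
      (fun k hk => decide_eq_false (fun h => hk (Subtype.ext h)))
      (Fin.last (d r + 1)) ?_)
    intro y hy
    have hx := h2 r (Function.update (fun i : Fin N => (0 : Fin (d i + 2))) r y)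
      (by rw [Function.update_self]; exact hy)
      (fun i hi => Function.update_of_ne hi _ _)
    rw [hP] at hx
    have hRarg : (fun k : (αᶜ : Finset (Fin N)) =>
        Function.update (fun i : Fin N => (0 : Fin (d i + 2))) r y ↑k)
        = (fun _ => 0) := by
      funext k
      exact Function.update_of_ne
        (fun h => (Finset.mem_compl.mp k.2) (by rw [h]; exact hr)) _ _
    have hXarg : (fun k : (αᶜ : Finset (Fin N)) => decide ((k : Fin N) = r))
        = (fun _ => false) := by
      funext k
      exact decide_eq_false (fun h => (Finset.mem_compl.mp k.2) (by rw [h]; exact hr))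
    rw [hRarg, hXarg] at hx
    have hQ0 := (mul_eq_zero.mp hx).resolve_right hqR.ne'
    have hQarg : (fun k : α =>
        Function.update (fun i : Fin N => (0 : Fin (d i + 2))) r y ↑k)
        = Function.update (fun _ => 0) (⟨r, hr⟩ : α) y := by
      funext k
      by_cases hk : k = (⟨r, hr⟩ : α)
      · subst hk
        simp only [Function.update_self]
      · rw [Function.update_of_ne (fun h => hk (Subtype.ext h)),
          Function.update_of_ne hk]
    rw [hQarg] at hQ0
    exact hQ0
  -- R-side positivity at v_r for r ∈ αᶜ
  have hRside : ∀ (r : Fin N) (hr : r ∈ (αᶜ : Finset (Fin N))),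
      0 < R (Function.update (fun _ => 0) (⟨r, hr⟩ : (αᶜ : Finset (Fin N)))
          (Fin.last (d r + 1)))
        (fun k : (αᶜ : Finset (Fin N)) => decide ((k : Fin N) = r)) := by
    intro r hr
    refine lt_of_lt_of_le hqR (key_lemma (fun i : (αᶜ : Finset (Fin N)) => d i + 2)
      R hR hRns (⟨r, hr⟩ : (αᶜ : Finset (Fin N))) (fun _ => 0)
      (fun k => decide ((k : Fin N) = r))
      (fun k hk => decide_eq_false (fun h => hk (Subtype.ext h)))
      (Fin.last (d r + 1)) ?_)
    intro y hy
    have hx := h2 r (Function.update (fun i : Fin N => (0 : Fin (d i + 2))) r y)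
      (by rw [Function.update_self]; exact hy)
      (fun i hi => Function.update_of_ne hi _ _)
    rw [hP] at hx
    have hQarg : (fun k : α =>
        Function.update (fun i : Fin N => (0 : Fin (d i + 2))) r y ↑k)
        = (fun _ => 0) := by
      funext k
      exact Function.update_of_ne
        (fun h => (Finset.mem_compl.mp hr) (by rw [← h]; exact k.2)) _ _
    have hXarg : (fun k : α => decide ((k : Fin N) = r)) = (fun _ => false) := by
      funext k
      exact decide_eq_false (fun h => (Finset.mem_compl.mp hr) (by rw [← h]; exact k.2))
    rw [hQarg, hXarg] at hx
    have hR0 := (mul_eq_zero.mp hx).resolve_left hqQ.ne'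
    have hRarg : (fun k : (αᶜ : Finset (Fin N)) =>
        Function.update (fun i : Fin N => (0 : Fin (d i + 2))) r y ↑k)
        = Function.update (fun _ => 0) (⟨r, hr⟩ : (αᶜ : Finset (Fin N))) y := by
      funext k
      by_cases hk : k = (⟨r, hr⟩ : (αᶜ : Finset (Fin N)))
      · subst hk
        simp only [Function.update_self]
      · rw [Function.update_of_ne (fun h => hk (Subtype.ext h)),
          Function.update_of_ne hk]
    rw [hRarg] at hR0
    exact hR0
  -- the final contradiction via h3
  by_cases hj : j ∈ α
  · obtain ⟨i, hi⟩ := hαc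
    have hij : i ≠ j := fun h => (Finset.mem_compl.mp hi) (by rw [h]; exact hj)
    have h3' := h3 i hij
    rw [hP] at h3'
    have hQarg : (fun k : α => if (k : Fin N) = i ∨ (k : Fin N) = j
        then Fin.last (d (k : Fin N) + 1) else 0)
        = Function.update (fun _ => 0) (⟨j, hj⟩ : α) (Fin.last (d j + 1)) := by
      funext k
      by_cases hk : k = (⟨j, hj⟩ : α)
      · subst hk
        rw [if_pos (Or.inr rfl)]
        simp only [Function.update_self]
      · have hki : (k : Fin N) ≠ i := fun h => (Finset.mem_compl.mp hi) (by rw [← h]; exact k.2)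
        have hkj : (k : Fin N) ≠ j := fun h => hk (Subtype.ext h)
        rw [if_neg (by tauto), Function.update_of_ne hk]
    have hQX : (fun k : α => decide ((k : Fin N) = i ∨ (k : Fin N) = j))
        = (fun k : α => decide ((k : Fin N) = j)) := by
      funext k
      have hki : (k : Fin N) ≠ i := fun h => (Finset.mem_compl.mp hi) (by rw [← h]; exact k.2)
      exact decide_eq_decide.mpr (or_iff_right hki)
    have hRarg : (fun k : (αᶜ : Finset (Fin N)) => if (k : Fin N) = i ∨ (k : Fin N) = j
        then Fin.last (d (k : Fin N) + 1) else 0)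
        = Function.update (fun _ => 0) (⟨i, hi⟩ : (αᶜ : Finset (Fin N)))
            (Fin.last (d i + 1)) := by
      funext k
      by_cases hk : k = (⟨i, hi⟩ : (αᶜ : Finset (Fin N)))
      · subst hk
        rw [if_pos (Or.inl rfl)]
        simp only [Function.update_self]
      · have hkj : (k : Fin N) ≠ j := fun h => (Finset.mem_compl.mp k.2) (by rw [h]; exact hj)
        have hki : (k : Fin N) ≠ i := fun h => hk (Subtype.ext h)
        rw [if_neg (by tauto), Function.update_of_ne hk]
    have hRX : (fun k : (αᶜ : Finset (Fin N)) => decide ((k : Fin N) = i ∨ (k : Fin N) = j))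
        = (fun k : (αᶜ : Finset (Fin N)) => decide ((k : Fin N) = i)) := by
      funext k
      have hkj : (k : Fin N) ≠ j := fun h => (Finset.mem_compl.mp k.2) (by rw [h]; exact hj)
      exact decide_eq_decide.mpr (or_iff_left hkj)
    rw [hQarg, hQX, hRarg, hRX] at h3'
    exact absurd h3' (mul_pos (hQside j hj) (hRside i hi)).ne'
  · have hjc : j ∈ (αᶜ : Finset (Fin N)) := Finset.mem_compl.mpr hj
    obtain ⟨i, hi⟩ := hα
    have hij : i ≠ j := fun h => hj (by rw [← h]; exact hi)
    have h3' := h3 i hij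
    rw [hP] at h3'
    have hQarg : (fun k : α => if (k : Fin N) = i ∨ (k : Fin N) = j
        then Fin.last (d (k : Fin N) + 1) else 0)
        = Function.update (fun _ => 0) (⟨i, hi⟩ : α) (Fin.last (d i + 1)) := by
      funext k
      by_cases hk : k = (⟨i, hi⟩ : α)
      · subst hk
        rw [if_pos (Or.inl rfl)]
        simp only [Function.update_self]
      · have hkj : (k : Fin N) ≠ j := fun h => hj (by rw [← h]; exact k.2)
        have hki : (k : Fin N) ≠ i := fun h => hk (Subtype.ext h)
        rw [if_neg (by tauto), Function.update_of_ne hk]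
    have hQX : (fun k : α => decide ((k : Fin N) = i ∨ (k : Fin N) = j))
        = (fun k : α => decide ((k : Fin N) = i)) := by
      funext k
      have hkj : (k : Fin N) ≠ j := fun h => hj (by rw [← h]; exact k.2)
      exact decide_eq_decide.mpr (or_iff_left hkj)
    have hRarg : (fun k : (αᶜ : Finset (Fin N)) => if (k : Fin N) = i ∨ (k : Fin N) = j
        then Fin.last (d (k : Fin N) + 1) else 0)
        = Function.update (fun _ => 0) (⟨j, hjc⟩ : (αᶜ : Finset (Fin N)))
            (Fin.last (d j + 1)) := by
      funext k
      by_cases hk : k = (⟨j, hjc⟩ : (αᶜ : Finset (Fin N)))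
      · subst hk
        rw [if_pos (Or.inr rfl)]
        simp only [Function.update_self]
      · have hki : (k : Fin N) ≠ i := fun h => (Finset.mem_compl.mp k.2) (by rw [h]; exact hi)
        have hkj : (k : Fin N) ≠ j := fun h => hk (Subtype.ext h)
        rw [if_neg (by tauto), Function.update_of_ne hk]
    have hRX : (fun k : (αᶜ : Finset (Fin N)) => decide ((k : Fin N) = i ∨ (k : Fin N) = j))
        = (fun k : (αᶜ : Finset (Fin N)) => decide ((k : Fin N) = j)) := by
      funext k
      have hki : (k : Fin N) ≠ i := fun h => (Finset.mem_compl.mp k.2) (by rw [h]; exact hi)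
      exact decide_eq_decide.mpr (or_iff_right hki)
    rw [hQarg, hQX, hRarg, hRX] at h3'
    exact absurd h3' (mul_pos (hQside i hi) (hRside j hjc)).ne'
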